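/- For all complex numbers z and w and any real p > 1, one has | |z|^{p-1} z - |w|^{p-1} w | ≤ p (|z| + |w|)^{p-1} |z - w|. -/

import Mathlib

open Real

/-- For `1 ≤ q` and `0 ≤ b ≤ a`, `a^q - b^q ≤ q * a^(q-1) * (a - b)`. -/
lemma rpow_sub_rpow_le_big {a b q : ℝ} (hb : 0 ≤ b) (hba : b ≤ a) (hq : 1 ≤ q) :
    a ^ q - b ^ q ≤ q * a ^ (q - 1) * (a - b) := by
  have ha : 0 ≤ a := hb.trans hba
  rcases eq_or_lt_of_le ha with h | ha'
  · have hb0 : b = 0 := le_antisymm (hba.trans h.symm.le) hb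
    subst hb0
    rw [← h]
    simp [Real.zero_rpow (by positivity : q ≠ 0)]
  · have hs : (-1 : ℝ) ≤ b / a - 1 := by
      have : 0 ≤ b / a := div_nonneg hb ha
      linarith
    have hbern := one_add_mul_self_le_rpow_one_add hs hq
    have h1 : (1 + (b / a - 1)) = b / a := by ring
    rw [h1, Real.div_rpow hb ha q] at hbern
    have haq : 0 < a ^ q := Real.rpow_pos_of_pos ha' q
    have haa : a ^ q = a ^ (q - 1) * a := by
      rw [← Real.rpow_add_one ha'.ne' (q - 1)]; ring_nf
    have h3 : (1 + q * (b / a - 1)) * a ^ q ≤ b ^ q := by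
      calc (1 + q * (b / a - 1)) * a ^ q ≤ (b ^ q / a ^ q) * a ^ q :=
            mul_le_mul_of_nonneg_right hbern haq.le
        _ = b ^ q := by field_simp
    have h5 : (1 + q * (b / a - 1)) * a ^ q
        = a ^ q + q * (a ^ (q - 1) * b) - q * a ^ q := by
      rw [haa]; field_simp; ring
    rw [h5] at h3
    rw [haa] at h3 ⊢
    linarith
    -- goal now linear in monomials

/-- For `0 ≤ q ≤ 1` and `0 < b ≤ a`, `a^q ≤ b^q + q * b^(q-1) * (a - b)`. -/
lemma rpow_sub_rpow_le_small {a b q : ℝ} (hb : 0 < b) (hba : b ≤ a) (hq0 : 0 ≤ q)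
    (hq : q ≤ 1) : a ^ q ≤ b ^ q + q * b ^ (q - 1) * (a - b) := by
  have ha : 0 < a := hb.trans_le hba
  have hs : (-1 : ℝ) ≤ a / b - 1 := by
    have : 0 ≤ a / b := div_nonneg ha.le hb.le
    linarith
  have hbern := rpow_one_add_le_one_add_mul_self hs hq0 hq
  have h1 : (1 + (a / b - 1)) = a / b := by ring
  rw [h1, Real.div_rpow ha.le hb.le q] at hbern
  have hbq : 0 < b ^ q := Real.rpow_pos_of_pos hb q
  have hbb : b ^ q = b ^ (q - 1) * b := by
    rw [← Real.rpow_add_one hb.ne' (q - 1)]; ring_nf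
  have h3 : a ^ q ≤ (1 + q * (a / b - 1)) * b ^ q := by
    calc a ^ q = (a ^ q / b ^ q) * b ^ q := by field_simp
      _ ≤ (1 + q * (a / b - 1)) * b ^ q := mul_le_mul_of_nonneg_right hbern hbq.le
  have h5 : (1 + q * (a / b - 1)) * b ^ q
      = b ^ q + q * (b ^ (q - 1) * a) - q * b ^ q := by
    rw [hbb]; field_simp; ring
  rw [h5] at h3
  rw [hbb] at h3 ⊢
  linarith

/-- Key scalar inequality: for `0 ≤ b ≤ a` and `0 < q`,
`(a^q - b^q) * b ≤ q * (a+b)^q * (a - b)`. -/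
lemma key_scalar {a b q : ℝ} (hb : 0 ≤ b) (hba : b ≤ a) (hq : 0 < q) :
    (a ^ q - b ^ q) * b ≤ q * (a + b) ^ q * (a - b) := by
  have ha : 0 ≤ a := hb.trans hba
  rcases eq_or_lt_of_le hb with hb0 | hb'
  · rw [← hb0]
    have h1 : 0 ≤ q * (a + 0) ^ q * (a - 0) := by
      apply mul_nonneg (mul_nonneg hq.le (Real.rpow_nonneg (by linarith) q))
      linarith
    linarith [h1]
  · rcases le_or_gt q 1 with hq1 | hq1
    · have h := rpow_sub_rpow_le_small hb' hba hq.le hq1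
      have hbq : b ^ (q - 1) * b = b ^ q := by
        rw [← Real.rpow_add_one hb'.ne' (q - 1)]; ring_nf
      have hmono : b ^ q ≤ (a + b) ^ q :=
        Real.rpow_le_rpow hb (by linarith) hq.le
      have s1 : (a ^ q - b ^ q) * b ≤ q * b ^ (q - 1) * (a - b) * b :=
        mul_le_mul_of_nonneg_right (by linarith) hb
      have s2 : q * b ^ (q - 1) * (a - b) * b = q * b ^ q * (a - b) := by
        rw [← hbq]; ring
      have s3 : q * b ^ q * (a - b) ≤ q * (a + b) ^ q * (a - b) := by
        apply mul_le_mul_of_nonneg_right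
          (mul_le_mul_of_nonneg_left hmono hq.le) (by linarith)
      linarith
    · have h := rpow_sub_rpow_le_big hb hba hq1.le
      have h1 : a ^ (q - 1) ≤ (a + b) ^ (q - 1) :=
        Real.rpow_le_rpow ha (by linarith) (by linarith)
      have h2 : (a + b) ^ (q - 1) * (a + b) = (a + b) ^ q := by
        rw [← Real.rpow_add_one (by positivity : (a + b) ≠ 0) (q - 1)]; ring_nf
      have h3 : a ^ (q - 1) * b ≤ (a + b) ^ q := by
        calc a ^ (q - 1) * b ≤ (a + b) ^ (q - 1) * (a + b) := by
              apply mul_le_mul h1 (by linarith) hb (Real.rpow_nonneg (by linarith) _)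
          _ = (a + b) ^ q := h2
      have s1 : (a ^ q - b ^ q) * b ≤ q * a ^ (q - 1) * (a - b) * b :=
        mul_le_mul_of_nonneg_right h hb
      have s2 : q * a ^ (q - 1) * (a - b) * b = q * (a - b) * (a ^ (q - 1) * b) := by
        ring
      have s3 : q * (a - b) * (a ^ (q - 1) * b) ≤ q * (a - b) * (a + b) ^ q :=
        mul_le_mul_of_nonneg_left h3 (mul_nonneg hq.le (by linarith))
      have s4 : q * (a - b) * (a + b) ^ q = q * (a + b) ^ q * (a - b) := by ring
      linarith

/-- One-sided version assuming `|w| ≤ |z|`. -/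
lemma aux_one_side (z w : ℂ) (p : ℝ) (hp : 1 < p) (hzw : ‖w‖ ≤ ‖z‖) :
    ‖(↑(‖z‖ ^ (p - 1)) : ℂ) * z
        - (↑(‖w‖ ^ (p - 1)) : ℂ) * w‖
      ≤ p * (‖z‖ + ‖w‖) ^ (p - 1) * ‖z - w‖ := by
  set a := ‖z‖ with ha_def
  set b := ‖w‖ with hb_def
  have ha : 0 ≤ a := norm_nonneg z
  have hb : 0 ≤ b := norm_nonneg w
  have hq : 0 < p - 1 := by linarith
  have hdecomp : (↑(a ^ (p - 1)) : ℂ) * z - (↑(b ^ (p - 1)) : ℂ) * w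
      = (↑(a ^ (p - 1)) : ℂ) * (z - w) + ((↑(a ^ (p - 1)) : ℂ) - ↑(b ^ (p - 1))) * w := by
    ring
  rw [hdecomp]
  have htri := norm_add_le ((↑(a ^ (p - 1)) : ℂ) * (z - w))
    (((↑(a ^ (p - 1)) : ℂ) - ↑(b ^ (p - 1))) * w)
  refine htri.trans ?_
  have h1 : ‖(↑(a ^ (p - 1)) : ℂ) * (z - w)‖
      = a ^ (p - 1) * ‖z - w‖ := by
    rw [norm_mul, Complex.norm_real, Real.norm_eq_abs, abs_of_nonneg (Real.rpow_nonneg ha _)]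
  have h2 : ‖((↑(a ^ (p - 1)) : ℂ) - ↑(b ^ (p - 1))) * w‖
      = (a ^ (p - 1) - b ^ (p - 1)) * b := by
    rw [norm_mul, ← Complex.ofReal_sub, Complex.norm_real, Real.norm_eq_abs, ← hb_def,
      abs_of_nonneg (by
        have := Real.rpow_le_rpow hb hzw hq.le
        linarith)]
  rw [h1, h2]
  have hkey : (a ^ (p - 1) - b ^ (p - 1)) * b ≤ (p - 1) * (a + b) ^ (p - 1) * (a - b) :=
    key_scalar hb hzw hq
  have habs : a - b ≤ ‖z - w‖ := norm_sub_norm_le z w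
  have hmono : a ^ (p - 1) ≤ (a + b) ^ (p - 1) :=
    Real.rpow_le_rpow ha (by linarith) hq.le
  have hpos : 0 ≤ (a + b) ^ (p - 1) := Real.rpow_nonneg (by linarith) _
  have habsw : 0 ≤ ‖z - w‖ := norm_nonneg _
  have s1 : a ^ (p - 1) * ‖z - w‖ ≤ (a + b) ^ (p - 1) * ‖z - w‖ :=
    mul_le_mul_of_nonneg_right hmono habsw
  have s2 : (p - 1) * (a + b) ^ (p - 1) * (a - b)
      ≤ (p - 1) * (a + b) ^ (p - 1) * ‖z - w‖ :=
    mul_le_mul_of_nonneg_left habs (mul_nonneg (by linarith) hpos)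
  nlinarith [hkey, s1, s2]

/-- Lipschitz-type estimate for the power nonlinearity `G_p(z) = |z|^{p-1} z`. -/
theorem abs_pow_mul_self_sub_le (z w : ℂ) (p : ℝ) (hp : 1 < p) :
    ‖(↑(‖z‖ ^ (p - 1)) : ℂ) * z
        - (↑(‖w‖ ^ (p - 1)) : ℂ) * w‖
      ≤ p * (‖z‖ + ‖w‖) ^ (p - 1) * ‖z - w‖ := by
  rcases le_total (‖w‖) (‖z‖) with h | h
  · exact aux_one_side z w p hp h
  · calc ‖(↑(‖z‖ ^ (p - 1)) : ℂ) * z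
          - (↑(‖w‖ ^ (p - 1)) : ℂ) * w‖
        = ‖(↑(‖w‖ ^ (p - 1)) : ℂ) * w
          - (↑(‖z‖ ^ (p - 1)) : ℂ) * z‖ := by
          rw [norm_sub_rev]
      _ ≤ p * (‖w‖ + ‖z‖) ^ (p - 1) * ‖w - z‖ :=
          aux_one_side w z p hp h
      _ = p * (‖z‖ + ‖w‖) ^ (p - 1) * ‖z - w‖ := by
          rw [add_comm, norm_sub_rev w z]
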